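/- Let m ≥ 1 and N be odd with N ≥ 1, and let n : Fin m → ℕ with ∑_j n j = N. Suppose at least two indices j have n j odd. Then 2 · γ(D_N, n) = γ(C_N, n), where γ(C_N, n) and γ(D_N, n) are the numbers of cyclic and dihedral necklaces with multiplicities n. -/

import Mathlib

/-- A coloring of the regular `N`-gon in `m` colors with multiplicities `n`:
a function `f : ZMod N → Fin m` whose fiber over each color `j` has cardinality `n j`. -/
def IsColoring (N m : ℕ) (n : Fin m → ℕ) (f : ZMod N → Fin m) : Prop :=
  ∀ j, Nat.card {x : ZMod N // f x = j} = n j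

/-- Cyclic equivalence of colorings: one is obtained from the other by a rotation `x ↦ x + c`. -/
def cyclicSetoid (N m : ℕ) (n : Fin m → ℕ) :
    Setoid {f : ZMod N → Fin m // IsColoring N m n f} where
  r f g := ∃ c : ZMod N, ∀ x, (g : ZMod N → Fin m) x = (f : ZMod N → Fin m) (x + c)
  iseqv := by
    refine ⟨fun f => ⟨0, fun x => by rw [add_zero]⟩, ?_, ?_⟩
    · rintro f g ⟨c, h⟩
      exact ⟨-c, fun x => by rw [h, neg_add_cancel_right]⟩
    · rintro f g k ⟨c, h1⟩ ⟨d, h2⟩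
      exact ⟨d + c, fun x => by rw [h2, h1, add_assoc]⟩

/-- The number of cyclic necklaces: orbits of colorings under rotations. -/
noncomputable def gammaC (N m : ℕ) (n : Fin m → ℕ) : ℕ :=
  Nat.card (Quotient (cyclicSetoid N m n))


section Aux
variable {N m : ℕ} {n : Fin m → ℕ}

/-- Fixed-point existence for involutions on odd-cardinality invariant finsets. -/
lemma exists_fixed_of_odd {α : Type*} [DecidableEq α] (ι : α → α) (hι : ∀ x, ι (ι x) = x)
    (s : Finset α) (hinv : ∀ x ∈ s, ι x ∈ s) (hodd : Odd s.card) : ∃ x ∈ s, ι x = x := by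
  induction s using Finset.strongInduction with
  | _ s ih =>
    rcases s.eq_empty_or_nonempty with rfl | ⟨a, ha⟩
    · simp at hodd
    by_cases hfa : ι a = a
    · exact ⟨a, ha, hfa⟩
    · have hιa : ι a ∈ s := hinv a ha
      have hsub : ({a, ι a} : Finset α) ⊆ s := by
        intro x hx; simp at hx; rcases hx with rfl | rfl <;> assumption
      have hcardp : ({a, ι a} : Finset α).card = 2 := by
        rw [Finset.card_insert_of_notMem (by simpa using (Ne.symm hfa)), Finset.card_singleton]
      set s' := s \ {a, ι a} with hs'
      have hss : s' ⊂ s := by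
        refine Finset.sdiff_ssubset ?_ ?_
        · exact hsub
        · exact ⟨a, by simp⟩
      have hinv' : ∀ x ∈ s', ι x ∈ s' := by
        intro x hx
        rw [hs', Finset.mem_sdiff] at hx ⊢
        obtain ⟨hxs, hxn⟩ := hx
        simp only [Finset.mem_insert, Finset.mem_singleton] at hxn ⊢
        push_neg at hxn ⊢
        refine ⟨hinv x hxs, ?_, ?_⟩
        · intro h; exact hxn.2 (by rw [← h, hι])
        · intro h; exact hxn.1 (by have := congrArg ι h; rwa [hι, hι] at this)
      have hcard' : s'.card = s.card - 2 := by
        rw [hs', Finset.card_sdiff_of_subset hsub, hcardp]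
      have hodd' : Odd s'.card := by
        rw [hcard']
        exact Nat.Odd.sub_even (hcardp ▸ Finset.card_le_card hsub) hodd (by norm_num)
      obtain ⟨x, hx, hfx⟩ := ih s' hss hinv' hodd'
      exact ⟨x, (Finset.sdiff_subset) hx, hfx⟩

lemma addRight_one_pow (k : ℕ) :
    (Equiv.addRight (1 : ZMod N)) ^ k = Equiv.addRight (k : ZMod N) := by
  induction k with
  | zero => ext x; simp
  | succ k ih => ext x; simp [pow_succ, ih, Equiv.Perm.mul_apply]; ring

lemma addRight_mem [NeZero N] (c : ZMod N) :
    Equiv.addRight c ∈ Subgroup.closure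
      ({Equiv.addRight (1 : ZMod N), Equiv.neg (ZMod N)} : Set (Equiv.Perm (ZMod N))) := by
  have : Equiv.addRight c = (Equiv.addRight (1 : ZMod N)) ^ (c.val) := by
    rw [addRight_one_pow, ZMod.natCast_zmod_val]
  rw [this]
  exact pow_mem (Subgroup.subset_closure (by simp)) _

lemma closure_structure (σ : Equiv.Perm (ZMod N))
    (h : σ ∈ Subgroup.closure
      ({Equiv.addRight (1 : ZMod N), Equiv.neg (ZMod N)} : Set (Equiv.Perm (ZMod N)))) :
    (∃ c, ∀ x, σ x = x + c) ∨ (∃ c, ∀ x, σ x = c - x) := by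
  induction h using Subgroup.closure_induction with
  | mem σ hσ =>
    rcases hσ with h | h
    · left; exact ⟨1, fun x => by rw [h]; simp⟩
    · right; exact ⟨0, fun x => by rw [h]; simp⟩
  | one => left; exact ⟨0, fun x => by simp⟩
  | mul σ τ hσ hτ ihσ ihτ =>
    rcases ihσ with ⟨a, ha⟩ | ⟨a, ha⟩ <;> rcases ihτ with ⟨b, hb⟩ | ⟨b, hb⟩
    · left; exact ⟨b + a, fun x => by rw [Equiv.Perm.mul_apply, hb, ha]; ring⟩
    · right; exact ⟨a + b, fun x => by rw [Equiv.Perm.mul_apply, hb, ha]; ring⟩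
    · right; exact ⟨a - b, fun x => by rw [Equiv.Perm.mul_apply, hb, ha]; ring⟩
    · left; exact ⟨a - b, fun x => by rw [Equiv.Perm.mul_apply, hb, ha]; ring⟩
  | inv σ hσ ih =>
    rcases ih with ⟨c, hc⟩ | ⟨c, hc⟩
    · left; refine ⟨-c, fun x => σ.injective ?_⟩
      rw [Equiv.Perm.coe_inv, Equiv.apply_symm_apply, hc]; ring
    · right; refine ⟨c, fun x => σ.injective ?_⟩
      rw [Equiv.Perm.coe_inv, Equiv.apply_symm_apply, hc]; ring

end Aux

section Aux2
variable {N m : ℕ} {n : Fin m → ℕ}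

/-- The reflected coloring `x ↦ f (-x)`. -/
def rho (f : {f : ZMod N → Fin m // IsColoring N m n f}) :
    {f : ZMod N → Fin m // IsColoring N m n f} :=
  ⟨fun x => f.1 (-x), fun j => by
    rw [← f.2 j]
    exact Nat.card_congr (Equiv.subtypeEquiv (Equiv.neg (ZMod N)) (fun x => Iff.rfl))⟩

lemma no_refl [NeZero N] (hNodd : Odd N)
    (hodd : 2 ≤ (Finset.univ.filter (fun j => Odd (n j))).card)
    (f : {f : ZMod N → Fin m // IsColoring N m n f}) :
    ¬ (cyclicSetoid N m n).r f (rho f) := by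
  classical
  rintro ⟨c, hc⟩
  -- hc x : f (-x) = f (x + c); hence f y = f (c - y)
  have hfι : ∀ y : ZMod N, f.1 (c - y) = f.1 y := by
    intro y
    have := hc (-y)
    simp only [rho] at this
    rw [neg_neg] at this
    rw [show (c - y : ZMod N) = -y + c by ring]; exact this.symm
  set ι : ZMod N → ZMod N := fun y => c - y with hι
  have hιι : ∀ y, ι (ι y) = y := fun y => by simp [hι]
  have h2u : IsUnit (2 : ZMod N) := by
    have := (ZMod.isUnit_iff_coprime 2 N).mpr (Nat.coprime_two_left.mpr hNodd)
    simpa using this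
  obtain ⟨j1, hj1, j2, hj2, hne⟩ := Finset.one_lt_card.mp hodd
  simp only [Finset.mem_filter, Finset.mem_univ, true_and] at hj1 hj2
  -- fixed point in each fiber
  have key : ∀ j : Fin m, Odd (n j) → ∃ x : ZMod N, f.1 x = j ∧ ι x = x := by
    intro j hj
    have hcard : (Finset.univ.filter (fun x => f.1 x = j)).card = n j := by
      rw [← f.2 j, Nat.card_eq_fintype_card, Fintype.card_subtype]
    obtain ⟨x, hx, hfx⟩ := exists_fixed_of_odd ι hιι (Finset.univ.filter (fun x => f.1 x = j))
      (fun x hx => by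
        simp only [Finset.mem_filter, Finset.mem_univ, true_and] at hx ⊢
        rw [hι]; rw [hfι]; exact hx)
      (hcard ▸ hj)
    simp only [Finset.mem_filter, Finset.mem_univ, true_and] at hx
    exact ⟨x, hx, hfx⟩
  obtain ⟨x1, hx1, hfx1⟩ := key j1 hj1
  obtain ⟨x2, hx2, hfx2⟩ := key j2 hj2
  have : x1 = x2 := by
    have h1 : (2 : ZMod N) * x1 = c := by
      have := hfx1; simp only [hι] at this
      have : c - x1 = x1 := this
      linear_combination -this
    have h2 : (2 : ZMod N) * x2 = c := by
      have := hfx2; simp only [hι] at this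
      have : c - x2 = x2 := this
      linear_combination -this
    exact h2u.mul_left_cancel (h1.trans h2.symm)
  exact hne (hx1 ▸ this ▸ hx2)

end Aux2

/-- Dihedral equivalence of colorings: one is obtained from the other by an element of
the subgroup of permutations of `ZMod N` generated by `x ↦ x + 1` and `x ↦ -x`. -/
def dihedralSetoid (N m : ℕ) (n : Fin m → ℕ) :
    Setoid {f : ZMod N → Fin m // IsColoring N m n f} where
  r f g := ∃ σ ∈ Subgroup.closure
      ({Equiv.addRight (1 : ZMod N), Equiv.neg (ZMod N)} : Set (Equiv.Perm (ZMod N))),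
      ∀ x, (g : ZMod N → Fin m) x = (f : ZMod N → Fin m) (σ x)
  iseqv := by
    refine ⟨fun f => ⟨1, one_mem _, fun x => rfl⟩, ?_, ?_⟩
    · rintro f g ⟨σ, hσ, h⟩
      exact ⟨σ⁻¹, inv_mem hσ, fun x => by rw [h, Equiv.Perm.coe_inv, Equiv.apply_symm_apply]⟩
    · rintro f g k ⟨σ, hσ, h1⟩ ⟨τ, hτ, h2⟩
      exact ⟨σ * τ, mul_mem hσ hτ, fun x => by rw [h2, h1, Equiv.Perm.mul_apply]⟩

/-- The number of dihedral necklaces: orbits of colorings under rotations and reflections. -/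
noncomputable def gammaD (N m : ℕ) (n : Fin m → ℕ) : ℕ :=
  Nat.card (Quotient (dihedralSetoid N m n))


section Main
variable {N m : ℕ} {n : Fin m → ℕ}

lemma dih_iff [NeZero N] (f g : {f : ZMod N → Fin m // IsColoring N m n f}) :
    (dihedralSetoid N m n).r f g ↔
      (cyclicSetoid N m n).r f g ∨ (cyclicSetoid N m n).r (rho f) g := by
  constructor
  · rintro ⟨σ, hσ, h⟩
    rcases closure_structure σ hσ with ⟨c, hc⟩ | ⟨c, hc⟩
    · left; exact ⟨c, fun x => by rw [h x, hc x]⟩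
    · right
      refine ⟨-c, fun x => ?_⟩
      show g.1 x = f.1 (-(x + -c))
      rw [h x, hc x]; congr 1; ring
  · rintro (⟨c, hc⟩ | ⟨c, hc⟩)
    · exact ⟨Equiv.addRight c, addRight_mem c, fun x => by rw [hc x]; rfl⟩
    · refine ⟨Equiv.neg (ZMod N) * Equiv.addRight c,
        mul_mem (Subgroup.subset_closure (by simp)) (addRight_mem c), fun x => ?_⟩
      have := hc x
      show g.1 x = f.1 (-(x + c))
      rw [this]; rfl

lemma dih_rho [NeZero N] (f : {f : ZMod N → Fin m // IsColoring N m n f}) :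
    (dihedralSetoid N m n).r f (rho f) :=
  ⟨Equiv.neg (ZMod N), Subgroup.subset_closure (by simp), fun x => rfl⟩

end Main

/-- Dihedral necklaces for odd `N` with at least two odd multiplicities:
`2 γ(D_N, n) = γ(C_N, n)`. -/
theorem dihedral_necklace_odd_many_odd_colors (m N : ℕ) (hm : 1 ≤ m) (hN : 1 ≤ N)
    (hNodd : Odd N) (n : Fin m → ℕ) (hsum : ∑ j, n j = N)
    (hodd : 2 ≤ (Finset.univ.filter (fun j => Odd (n j))).card) :
    2 * gammaD N m n = gammaC N m n := by
  classical
  haveI : NeZero N := ⟨by omega⟩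
  set Qc := Quotient (cyclicSetoid N m n) with hQc
  set Qd := Quotient (dihedralSetoid N m n) with hQd
  haveI : Fintype Qc := Fintype.ofFinite _
  haveI : Fintype Qd := Fintype.ofFinite _
  let φ : Qc → Qd := Quotient.map id (fun f g h => by
    obtain ⟨c, hc⟩ := h
    exact ⟨Equiv.addRight c, addRight_mem c, fun x => by simpa using hc x⟩)
  have hφmk : ∀ f, φ (Quotient.mk (cyclicSetoid N m n) f) =
      Quotient.mk (dihedralSetoid N m n) f := fun f => rfl
  have hfiber : ∀ b : Qd, {a : Qc | φ a = b}.ncard = 2 := by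
    refine Quotient.ind (fun f => ?_)
    have hset : {a : Qc | φ a = Quotient.mk (dihedralSetoid N m n) f} =
        {Quotient.mk (cyclicSetoid N m n) f, Quotient.mk (cyclicSetoid N m n) (rho f)} := by
      ext a
      induction a using Quotient.ind with
      | _ g =>
        simp only [Set.mem_setOf_eq, Set.mem_insert_iff, Set.mem_singleton_iff, hφmk]
        constructor
        · intro h
          have hgf := (dihedralSetoid N m n).symm (Quotient.exact h)
          rcases (dih_iff f g).mp hgf with hcyc | hcyc
          · left; exact (Quotient.sound hcyc).symm
          · right; exact (Quotient.sound hcyc).symm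
        · rintro (h | h)
          · exact Quotient.sound ((dih_iff g f).mpr (Or.inl (Quotient.exact h)))
          · have h1 : (dihedralSetoid N m n).r g (rho f) :=
              (dih_iff g (rho f)).mpr (Or.inl (Quotient.exact h))
            have h2 : (dihedralSetoid N m n).r f g :=
              (dihedralSetoid N m n).trans (dih_rho f) ((dihedralSetoid N m n).symm h1)
            exact Quotient.sound ((dihedralSetoid N m n).symm h2)
    rw [hset]
    refine Set.ncard_pair (fun h => ?_)
    exact no_refl hNodd hodd f (Quotient.exact h)
  have hcards : ∀ b : Qd, Fintype.card {a : Qc // φ a = b} = 2 := by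
    intro b
    rw [← Nat.card_eq_fintype_card]
    have : Nat.card {a : Qc // φ a = b} = {a : Qc | φ a = b}.ncard :=
      Nat.card_coe_set_eq _
    rw [this, hfiber b]
  have hsum2 : Fintype.card Qc = 2 * Fintype.card Qd := by
    rw [Fintype.card_congr (Equiv.sigmaFiberEquiv φ).symm, Fintype.card_sigma]
    simp [hcards, Finset.sum_const, mul_comm]
  rw [gammaC, gammaD, Nat.card_eq_fintype_card, Nat.card_eq_fintype_card]
  exact (hsum2).symm
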